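/- arXiv:2207.03623 — 3 statements merged into one kernel-verified Lean document; each statement's English description precedes it below -/
import Mathlib

section
/- If P = (x_0, e_1, …, e_{p_0}, x_1, e_{p_0+1}, …, x_n) is a closed dynamic H-trail in an H-colored multigraph G, then the sequence C obtained by replacing each edge e = x_i x_{i+1} of P by the pair of vertices f(x_i,e), f(x_{i+1},e) is a cycle in L_2^H(G); moreover C alternates between edges of E(L_2^H(G))\M_J and edges of the joint matching M_J. -/
namespace DynH

/-- A multigraph without loops: each edge `e` has two distinct endpoints
`G.fst e` and `G.snd e`. Parallel edges are allowed since `E` is an abstract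
edge type. -/
structure Multigraph (V E : Type) where
  fst : E → V
  snd : E → V
  loopless : ∀ e, fst e ≠ snd e

variable {V E C : Type}

namespace Multigraph

/-- The vertex `x` is incident with the edge `e`. -/
def inc (G : Multigraph V E) (x : V) (e : E) : Prop := G.fst e = x ∨ G.snd e = x

/-- The edge `e` joins the vertices `x` and `y`. -/
def joins (G : Multigraph V E) (e : E) (x y : V) : Prop :=
  (G.fst e = x ∧ G.snd e = y) ∨ (G.fst e = y ∧ G.snd e = x)

/-- `e` and `g` have the same pair of end vertices. -/
def parallel (G : Multigraph V E) (e g : E) : Prop :=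
  (G.fst e = G.fst g ∧ G.snd e = G.snd g) ∨ (G.fst e = G.snd g ∧ G.snd e = G.fst g)

end Multigraph

instance Multigraph.decInc (G : Multigraph V E) [DecidableEq V] :
    ∀ (x : V) (e : E), Decidable (G.inc x e) := fun x e => by
  unfold Multigraph.inc; infer_instance

/-- The underlying simple graph of a multigraph (used to express connectedness). -/
def SupportGraph (G : Multigraph V E) : SimpleGraph V where
  Adj x y := x ≠ y ∧ ∃ e, G.joins e x y
  symm := ⟨by
    rintro x y ⟨hxy, e, he⟩
    exact ⟨hxy.symm, e, he.symm⟩⟩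
  loopless := ⟨fun x h => h.1 rfl⟩

/-- Vertices of `L_2^H(G)`: the incidences `f(x,e)`. -/
def L2V (G : Multigraph V E) : Type := {p : V × E // G.inc p.1 p.2}

instance (G : Multigraph V E) [DecidableEq V] [DecidableEq E] : DecidableEq (L2V G) := by
  unfold L2V; infer_instance

instance (G : Multigraph V E) [Fintype V] [Fintype E] [DecidableEq V] : Fintype (L2V G) := by
  unfold L2V; infer_instance

/-- Adjacency of `L_2^H(G)` (one-sided; it is symmetrized below, which changes
nothing when `adjH` is symmetric). -/
def L2Adj (G : Multigraph V E) (adjH : C → C → Prop) (c : E → C) (p q : L2V G) : Prop :=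
  (p.val.2 = q.val.2 ∧ p.val.1 ≠ q.val.1)
  ∨ (p.val.1 = q.val.1 ∧ p.val.2 ≠ q.val.2 ∧ adjH (c p.val.2) (c q.val.2))
  ∨ (p.val.1 ≠ q.val.1 ∧ p.val.2 ≠ q.val.2 ∧ G.parallel p.val.2 q.val.2)

/-- The auxiliary simple graph `L_2^H(G)`. -/
def L2Graph (G : Multigraph V E) (adjH : C → C → Prop) (c : E → C) :
    SimpleGraph (L2V G) where
  Adj p q := L2Adj G adjH c p q ∨ L2Adj G adjH c q p
  symm := ⟨fun _ _ h => Or.symm h⟩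
  loopless := ⟨fun p h => by
    rcases h with h | h <;> rcases h with ⟨_, h⟩ | ⟨_, h, _⟩ | ⟨h, _⟩ <;> exact h rfl⟩

/-- The joint matching `M_J = { f(x,e)f(y,e) : e = xy ∈ E(G) }` of `L_2^H(G)`. -/
def MJ (G : Multigraph V E) : Set (Sym2 (L2V G)) :=
  {s | ∃ p q : L2V G, s = s(p, q) ∧ p ≠ q ∧ p.val.2 = q.val.2}

/-- A matching of a simple graph, given as a set of edges. -/
def IsMatchingSet {α : Type} (Gr : SimpleGraph α) (M : Set (Sym2 α)) : Prop :=
  M ⊆ Gr.edgeSet ∧ ∀ v : α, ∀ s ∈ M, ∀ t ∈ M, v ∈ s → v ∈ t → s = t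

/-- A perfect matching of a simple graph, given as a set of edges. -/
def IsPerfectMatchingSet {α : Type} (Gr : SimpleGraph α) (M : Set (Sym2 α)) : Prop :=
  IsMatchingSet Gr M ∧ ∀ v : α, ∃ s ∈ M, v ∈ s

/-- Every entry `(x, y, e)` of the list records a traversal of an edge `e`
joining `x` and `y` (from `x` to `y`). -/
def GoodEntries (G : Multigraph V E) (L : List (V × V × E)) : Prop :=
  ∀ t ∈ L, G.joins t.2.2 t.1 t.2.1

/-- The list of edges underlying a list of edge traversals. -/
def edgesOf (L : List (V × V × E)) : List E := L.map fun t => t.2.2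

/-- Allowed consecutive pair in a dynamic `H`-trail: either a transition through a
common vertex with colors adjacent in `H`, or a lane change between parallel edges. -/
def DynStep (G : Multigraph V E) (adjH : C → C → Prop) (c : E → C)
    (a b : V × V × E) : Prop :=
  (a.2.1 = b.1 ∧ adjH (c a.2.2) (c b.2.2))
  ∨ (a.1 = b.1 ∧ a.2.1 = b.2.1 ∧ a.2.2 ≠ b.2.2 ∧ G.parallel a.2.2 b.2.2)

/-- Allowed consecutive pair in an `H`-trail: transition through a common vertex
with colors adjacent in `H`. -/
def HStep (adjH : C → C → Prop) (c : E → C) (a b : V × V × E) : Prop :=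
  a.2.1 = b.1 ∧ adjH (c a.2.2) (c b.2.2)

/-- A closed dynamic `H`-trail, encoded as the cyclic list of its edge traversals. -/
def IsClosedDynHTrail (G : Multigraph V E) (adjH : C → C → Prop) (c : E → C)
    (L : List (V × V × E)) : Prop :=
  L ≠ [] ∧ (edgesOf L).Nodup ∧ GoodEntries G L ∧
    ∀ p ∈ L.zip (L.rotate 1), DynStep G adjH c p.1 p.2

/-- A closed `H`-trail, encoded as the cyclic list of its edge traversals. -/
def IsClosedHTrail (G : Multigraph V E) (adjH : C → C → Prop) (c : E → C)
    (L : List (V × V × E)) : Prop :=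
  L ≠ [] ∧ (edgesOf L).Nodup ∧ GoodEntries G L ∧
    ∀ p ∈ L.zip (L.rotate 1), HStep adjH c p.1 p.2

/-- A (non-closed) dynamic `H`-trail. -/
def IsDynHTrail (G : Multigraph V E) (adjH : C → C → Prop) (c : E → C)
    (L : List (V × V × E)) : Prop :=
  L ≠ [] ∧ (edgesOf L).Nodup ∧ GoodEntries G L ∧
    ∀ p ∈ L.zip L.tail, DynStep G adjH c p.1 p.2

/-- A (non-closed) `H`-trail. -/
def IsHTrail (G : Multigraph V E) (adjH : C → C → Prop) (c : E → C)
    (L : List (V × V × E)) : Prop :=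
  L ≠ [] ∧ (edgesOf L).Nodup ∧ GoodEntries G L ∧
    ∀ p ∈ L.zip L.tail, HStep adjH c p.1 p.2

/-- A cycle in `L_2^H(G)` (as a cyclic list of distinct vertices) which alternates
between edges of the joint matching `M_J` (at even positions) and edges of
`E(L_2^H(G)) \ M_J` (at odd positions). -/
def IsAltCycle (G : Multigraph V E) (adjH : C → C → Prop) (c : E → C)
    (vs : List (L2V G)) : Prop :=
  vs ≠ [] ∧ vs.Nodup ∧ 3 ≤ vs.length ∧
    ∀ k : Fin vs.length,
      (L2Graph G adjH c).Adj (vs.get k)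
        (vs.get ⟨(k.val + 1) % vs.length, Nat.mod_lt _ (Nat.lt_of_le_of_lt (Nat.zero_le _) k.isLt)⟩) ∧
      (s(vs.get k,
          vs.get ⟨(k.val + 1) % vs.length,
            Nat.mod_lt _ (Nat.lt_of_le_of_lt (Nat.zero_le _) k.isLt)⟩) ∈ MJ G ↔ k.val % 2 = 0)

/-- The simple graph `G_x` on the edges of `G` incident with `x`; two such edges are
adjacent iff their colors are adjacent in `H`. (Symmetrized; this changes nothing
when `adjH` is symmetric.) -/
def GxGraph (G : Multigraph V E) (adjH : C → C → Prop) (c : E → C) (x : V) :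
    SimpleGraph {e : E // G.inc x e} where
  Adj a b := a ≠ b ∧ (adjH (c a.val) (c b.val) ∨ adjH (c b.val) (c a.val))
  symm := ⟨by rintro a b ⟨hab, h⟩; exact ⟨hab.symm, h.symm⟩⟩
  loopless := ⟨fun a h => h.1 rfl⟩

end DynH

namespace DynH

/-- If `P` is a closed dynamic `H`-trail in `G` (encoded by the list `L` of its edge
traversals `(x_i, x_{i+1}, e)`), then the sequence `C` of vertices of `L_2^H(G)`
obtained by replacing each traversal of an edge `e = x_i x_{i+1}` by the pair
`f(x_i,e), f(x_{i+1},e)` is a cycle in `L_2^H(G)`, and it alternates between edges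
of the joint matching `M_J` and edges of `E(L_2^H(G)) \ M_J`. -/
theorem closedDynHTrail_to_altCycle {V E C : Type} (G : Multigraph V E)
    (adjH : C → C → Prop) (hH : Symmetric adjH) (c : E → C)
    (L : List (V × V × E)) (hL : IsClosedDynHTrail G adjH c L)
    (vs : List (L2V G)) (hlen : vs.length = 2 * L.length)
    (hcorr : ∀ i (hi : i < L.length),
      (vs.get ⟨2 * i, by omega⟩).val = ((L.get ⟨i, hi⟩).1, (L.get ⟨i, hi⟩).2.2) ∧
      (vs.get ⟨2 * i + 1, by omega⟩).val = ((L.get ⟨i, hi⟩).2.1, (L.get ⟨i, hi⟩).2.2)) :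
    IsAltCycle G adjH c vs := by
  obtain ⟨hne, hnd, hgood, hstep⟩ := hL
  set n := L.length with hn
  have hn1 : 1 ≤ n := List.length_pos_iff.mpr hne
  -- congruence helpers
  have Lcongr : ∀ i j (hi : i < n) (hj : j < n), i = j →
      L.get ⟨i, hi⟩ = L.get ⟨j, hj⟩ := by
    intro i j hi hj h; subst h; rfl
  have vscongr : ∀ i j (hi : i < vs.length) (hj : j < vs.length), i = j →
      vs.get ⟨i, hi⟩ = vs.get ⟨j, hj⟩ := by
    intro i j hi hj h; subst h; rfl
  -- every entry joins its endpoints, hence endpoints are distinct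
  have hjoins : ∀ i (hi : i < n),
      G.joins (L.get ⟨i, hi⟩).2.2 (L.get ⟨i, hi⟩).1 (L.get ⟨i, hi⟩).2.1 :=
    fun i hi => hgood _ (List.get_mem L ⟨i, hi⟩)
  have hvne : ∀ i (hi : i < n), (L.get ⟨i, hi⟩).1 ≠ (L.get ⟨i, hi⟩).2.1 := by
    intro i hi h
    rcases hjoins i hi with ⟨h1, h2⟩ | ⟨h1, h2⟩
    · exact G.loopless _ (h1.trans (h.trans h2.symm))
    · exact G.loopless _ (h1.trans (h.symm.trans h2.symm))
  -- edges are injective in the list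
  have hedge : ∀ i j (hi : i < n) (hj : j < n),
      (L.get ⟨i, hi⟩).2.2 = (L.get ⟨j, hj⟩).2.2 → i = j := by
    intro i j hi hj h
    have hinj := List.nodup_iff_injective_get.mp hnd
    have hlm : (edgesOf L).length = n := by simp [edgesOf, hn]
    have hi' : i < (edgesOf L).length := by omega
    have hj' : j < (edgesOf L).length := by omega
    have hv : (edgesOf L).get ⟨i, hi'⟩ = (edgesOf L).get ⟨j, hj'⟩ := by
      simp only [edgesOf, List.get_eq_getElem, List.getElem_map]
      exact h
    have := hinj hv
    exact congrArg Fin.val this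
  -- the cyclic step property with explicit indices
  have hstep' : ∀ i j (hi : i < n) (hj : j < n), j = (i + 1) % n →
      DynStep G adjH c (L.get ⟨i, hi⟩) (L.get ⟨j, hj⟩) := by
    intro i j hi hj hij
    subst hij
    have hlz : (L.zip (L.rotate 1)).length = n := by
      simp [List.length_zip, List.length_rotate, hn]
    have hiz : i < (L.zip (L.rotate 1)).length := by omega
    have hmem := List.get_mem (L.zip (L.rotate 1)) ⟨i, hiz⟩
    have hget : (L.zip (L.rotate 1)).get ⟨i, hiz⟩ =
        (L.get ⟨i, hi⟩, L.get ⟨(i + 1) % n, Nat.mod_lt _ hn1⟩) := by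
      have h2 := List.get_rotate L 1 ⟨i, by simp only [List.length_rotate]; omega⟩
      simp only [List.get_eq_getElem] at h2
      simp only [List.get_eq_getElem, List.getElem_zip, Prod.mk.injEq]
      exact ⟨trivial, h2⟩
    rw [hget] at hmem
    exact hstep _ hmem
  -- the trail has at least two entries
  have hn2 : 2 ≤ n := by
    by_contra hcon
    have hn1' : n = 1 := by omega
    have h10 : (0 + 1) % n = 0 := by simp [hn1']
    have hs := hstep' 0 0 (by omega) (by omega) h10.symm
    rcases hs with ⟨h1, _⟩ | ⟨_, _, h3, _⟩
    · exact hvne 0 (by omega) h1.symm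
    · exact h3 rfl
  -- values of vs at even and odd positions
  have hval0 : ∀ i (hi : i < n) (h : 2 * i < vs.length),
      (vs.get ⟨2 * i, h⟩).val = ((L.get ⟨i, hi⟩).1, (L.get ⟨i, hi⟩).2.2) :=
    fun i hi h => (hcorr i hi).1
  have hval1 : ∀ i (hi : i < n) (h : 2 * i + 1 < vs.length),
      (vs.get ⟨2 * i + 1, h⟩).val = ((L.get ⟨i, hi⟩).2.1, (L.get ⟨i, hi⟩).2.2) :=
    fun i hi h => (hcorr i hi).2
  refine ⟨?_, ?_, ?_, ?_⟩
  · intro h; rw [h] at hlen; simp at hlen; omega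
  · rw [List.nodup_iff_injective_get]
    intro a b h
    obtain ⟨ia, ra, hra, haa⟩ : ∃ i r, r < 2 ∧ a.val = 2 * i + r :=
      ⟨a.val / 2, a.val % 2, by omega, by omega⟩
    obtain ⟨ib, rb, hrb, hbb⟩ : ∃ i r, r < 2 ∧ b.val = 2 * i + r :=
      ⟨b.val / 2, b.val % 2, by omega, by omega⟩
    have hia : ia < n := by have := a.isLt; omega
    have hib : ib < n := by have := b.isLt; omega
    have ha' : vs.get a = vs.get ⟨2 * ia + ra, by omega⟩ := by
      rcases a with ⟨av, hav⟩; exact vscongr _ _ _ _ haa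
    have hb' : vs.get b = vs.get ⟨2 * ib + rb, by omega⟩ := by
      rcases b with ⟨bv, hbv⟩; exact vscongr _ _ _ _ hbb
    rw [ha', hb'] at h
    have hvals := congrArg Subtype.val h
    -- extract values according to parity
    have hget : ∀ (i r : ℕ) (hi : i < n) (hr : r < 2) (hh : 2 * i + r < vs.length),
        (vs.get ⟨2 * i + r, hh⟩).val =
          (if r = 0 then (L.get ⟨i, hi⟩).1 else (L.get ⟨i, hi⟩).2.1,
           (L.get ⟨i, hi⟩).2.2) := by
      intro i r hi hr hh
      interval_cases r
      · simpa using hval0 i hi (by omega)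
      · simpa using hval1 i hi (by omega)
    rw [hget ia ra hia hra (by omega), hget ib rb hib hrb (by omega)] at hvals
    rw [Prod.mk.injEq] at hvals
    have hiab : ia = ib := hedge _ _ _ _ hvals.2
    subst hiab
    have hfst := hvals.1
    have hrab : ra = rb := by
      rcases (show ra = 0 ∨ ra = 1 by omega) with h0 | h0 <;>
        rcases (show rb = 0 ∨ rb = 1 by omega) with h1 | h1 <;> subst h0 <;> subst h1
      · rfl
      · simp only [if_pos rfl, if_neg (by omega : ¬ (1:ℕ) = 0)] at hfst
        exact absurd hfst (hvne ia hia)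
      · simp only [if_pos rfl, if_neg (by omega : ¬ (1:ℕ) = 0)] at hfst
        exact absurd hfst.symm (hvne ia hia)
      · rfl
    apply Fin.ext; omega
  · omega
  · intro k
    obtain ⟨i, r, hr, hk⟩ : ∃ i r, r < 2 ∧ k.val = 2 * i + r :=
      ⟨k.val / 2, k.val % 2, by omega, by omega⟩
    have hi : i < n := by have := k.isLt; omega
    interval_cases r
    · -- even position: matching edge
      have hk1 : (k.val + 1) % vs.length = 2 * i + 1 := by
        rw [Nat.mod_eq_of_lt (by omega)]; omega
      have hp : vs.get k = vs.get ⟨2 * i, by omega⟩ := by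
        congr 1; apply Fin.ext; show k.val = 2 * i; omega
      have hq : vs.get ⟨(k.val + 1) % vs.length,
            Nat.mod_lt _ (Nat.lt_of_le_of_lt (Nat.zero_le _) k.isLt)⟩ =
          vs.get ⟨2 * i + 1, by omega⟩ := vscongr _ _ _ _ hk1
      rw [hp, hq]
      set p := vs.get (⟨2 * i, by omega⟩ : Fin vs.length) with hpd
      set q := vs.get (⟨2 * i + 1, by omega⟩ : Fin vs.length) with hqd
      have hpv : p.val = ((L.get ⟨i, hi⟩).1, (L.get ⟨i, hi⟩).2.2) := hval0 i hi _
      have hqv : q.val = ((L.get ⟨i, hi⟩).2.1, (L.get ⟨i, hi⟩).2.2) := hval1 i hi _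
      have hfst : p.val.1 ≠ q.val.1 := by rw [hpv, hqv]; exact hvne i hi
      have hsnd : p.val.2 = q.val.2 := by rw [hpv, hqv]
      have hpq : p ≠ q := fun h => hfst (by rw [h])
      constructor
      · show L2Adj G adjH c p q ∨ L2Adj G adjH c q p; unfold L2Adj
        exact Or.inl (Or.inl ⟨hsnd, hfst⟩)
      · constructor
        · intro _; omega
        · intro _; exact ⟨p, q, rfl, hpq, hsnd⟩
    · -- odd position: non-matching edge
      have hj : (i + 1) % n < n := Nat.mod_lt _ hn1
      have hk1 : (k.val + 1) % vs.length = 2 * ((i + 1) % n) := by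
        rcases Nat.lt_or_ge (i + 1) n with h | h
        · rw [Nat.mod_eq_of_lt (by omega), Nat.mod_eq_of_lt (by omega)]; omega
        · have hin : i + 1 = n := by omega
          have h1 : k.val + 1 = vs.length := by omega
          rw [h1, Nat.mod_self, hin, Nat.mod_self]
      set j := (i + 1) % n with hjd
      have hine : i ≠ j := by
        rcases Nat.lt_or_ge (i + 1) n with h | h
        · rw [hjd, Nat.mod_eq_of_lt (by omega)]; omega
        · have hin : i + 1 = n := by omega
          rw [hjd, hin, Nat.mod_self]; omega
      have hp : vs.get k = vs.get ⟨2 * i + 1, by omega⟩ := by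
        congr 1; apply Fin.ext; show k.val = 2 * i + 1; omega
      have hq : vs.get ⟨(k.val + 1) % vs.length,
            Nat.mod_lt _ (Nat.lt_of_le_of_lt (Nat.zero_le _) k.isLt)⟩ =
          vs.get ⟨2 * j, by omega⟩ := vscongr _ _ _ _ hk1
      rw [hp, hq]
      set p := vs.get (⟨2 * i + 1, by omega⟩ : Fin vs.length) with hpd
      set q := vs.get (⟨2 * j, by omega⟩ : Fin vs.length) with hqd
      have hpv : p.val = ((L.get ⟨i, hi⟩).2.1, (L.get ⟨i, hi⟩).2.2) := hval1 i hi _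
      have hqv : q.val = ((L.get ⟨j, hj⟩).1, (L.get ⟨j, hj⟩).2.2) := hval0 j hj _
      have hene : p.val.2 ≠ q.val.2 := by
        rw [hpv, hqv]
        intro h
        exact hine (hedge _ _ _ _ h)
      have hds := hstep' i j hi hj rfl
      constructor
      · show L2Adj G adjH c p q ∨ L2Adj G adjH c q p; unfold L2Adj
        rcases hds with ⟨h1, h2⟩ | ⟨hb1, hb2, hb3, hb4⟩
        · refine Or.inl (Or.inr (Or.inl ⟨?_, hene, ?_⟩))
          · rw [hpv, hqv]; exact h1
          · rw [hpv, hqv]; exact h2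
        · refine Or.inl (Or.inr (Or.inr ⟨?_, hene, ?_⟩))
          · rw [hpv, hqv]
            intro h
            have h' : (L.get ⟨i, hi⟩).2.1 = (L.get ⟨j, hj⟩).1 := h
            rw [hb2] at h'
            exact hvne j hj h'.symm
          · rw [hpv, hqv]; exact hb4
      · constructor
        · rintro ⟨p', q', hs, hne', heq⟩
          rcases (Sym2.eq_iff).mp hs with ⟨h1, h2⟩ | ⟨h1, h2⟩
          · exact absurd (by rw [h1, h2]; exact heq) hene
          · exact absurd (by rw [h1, h2]; exact heq.symm) hene
        · intro h; omega

end DynH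
end

section
/- Let C = (f(x_1,e_1), f(y_1,e_1), f(x_2,e_2), f(y_2,e_2), …, f(y_q,e_q), f(x_1,e_1)), with e_i = x_i y_i ∈ E(G), be a cycle in L_2^H(G) alternating between edges of E(L_2^H(G))\M_J and edges of M_J. Then the sequence in G that traverses the edges e_1, e_2, …, e_q in this order (changing lanes between consecutive parallel edges with the same ordered end pair, and otherwise continuing through the shared vertex) is a closed dynamic H-trail in G. -/
namespace DynH

lemma Multigraph.parallel_symm' (G : Multigraph V E) {e g : E}
    (h : G.parallel e g) : G.parallel g e := by
  rcases h with ⟨h1, h2⟩ | ⟨h1, h2⟩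
  · exact Or.inl ⟨h1.symm, h2.symm⟩
  · exact Or.inr ⟨h2.symm, h1.symm⟩

lemma joins_of_inc (G : Multigraph V E) {x y : V} {e : E}
    (hx : G.inc x e) (hy : G.inc y e) (hxy : x ≠ y) : G.joins e x y := by
  rcases hx with hx | hx <;> rcases hy with hy | hy
  · exact absurd (hx.symm.trans hy) hxy
  · exact Or.inl ⟨hx, hy⟩
  · exact Or.inr ⟨hy, hx⟩
  · exact absurd (hx.symm.trans hy) hxy

lemma inc_eq (G : Multigraph V E) {z x y : V} {e : E}
    (hz : G.inc z e) (hj : G.joins e x y) (hzx : z ≠ x) : z = y := by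
  rcases hz with hz | hz <;> rcases hj with ⟨h1, h2⟩ | ⟨h1, h2⟩
  · exact absurd (hz.symm.trans h1) hzx
  · exact hz.symm.trans h1
  · exact hz.symm.trans h2
  · exact absurd (hz.symm.trans h2) hzx

lemma inc_of_parallel (G : Multigraph V E) {x : V} {e g : E}
    (hp : G.parallel e g) (hx : G.inc x g) : G.inc x e := by
  rcases hp with ⟨h1, h2⟩ | ⟨h1, h2⟩ <;> rcases hx with hx | hx
  · exact Or.inl (h1.trans hx)
  · exact Or.inr (h2.trans hx)
  · exact Or.inr (h2.trans hx)
  · exact Or.inl (h1.trans hx)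

lemma mem_MJ_iff (G : Multigraph V E) (p q : L2V G) :
    s(p, q) ∈ MJ G ↔ p ≠ q ∧ p.val.2 = q.val.2 := by
  constructor
  · rintro ⟨a, b, hs, hab, h2⟩
    rw [Sym2.eq_iff] at hs
    rcases hs with ⟨hp, hq⟩ | ⟨hp, hq⟩
    · exact ⟨hp ▸ hq ▸ hab, hp ▸ hq ▸ h2⟩
    · exact ⟨hp ▸ hq ▸ hab.symm, hp ▸ hq ▸ h2.symm⟩
  · rintro ⟨h1, h2⟩
    exact ⟨p, q, rfl, h1, h2⟩

/-- If `C` (encoded by the list of vertices `vs = [f(x_1,e_1), f(y_1,e_1), …,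
f(x_q,e_q), f(y_q,e_q)]`) is a cycle of `L_2^H(G)` alternating between edges of
`E(L_2^H(G)) \ M_J` and edges of `M_J`, then traversing the edges `e_1, …, e_q` of
`G` in this order (changing lanes between consecutive parallel edges, and otherwise
continuing through the shared vertex) yields a closed dynamic `H`-trail in `G`. -/
theorem altCycle_to_closedDynHTrail {V E C : Type} (G : Multigraph V E)
    (adjH : C → C → Prop) (hH : Symmetric adjH) (c : E → C)
    (vs : List (L2V G)) (hvs : IsAltCycle G adjH c vs) (heven : vs.length % 2 = 0) :
    ∃ L : List (V × V × E), IsClosedDynHTrail G adjH c L ∧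
      ∃ hlen : vs.length = 2 * L.length,
        ∀ i (hi : i < L.length),
          (vs.get ⟨2 * i, by omega⟩).val = ((L.get ⟨i, hi⟩).1, (L.get ⟨i, hi⟩).2.2) ∧
          (vs.get ⟨2 * i + 1, by omega⟩).val = ((L.get ⟨i, hi⟩).2.1, (L.get ⟨i, hi⟩).2.2) := by
  obtain ⟨hne, hnodup, hlen3, hcyc⟩ := hvs
  have hginj : Function.Injective vs.get := List.nodup_iff_injective_get.mp hnodup
  set n := vs.length with hn
  have hq2 : 2 ≤ n / 2 := by omega
  set q := n / 2 with hqdef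
  have hnq : n = 2 * q := by omega
  have h2i : ∀ i : Fin q, 2 * i.val < n := fun i => by have := i.isLt; omega
  have h2i1 : ∀ i : Fin q, 2 * i.val + 1 < n := fun i => by have := i.isLt; omega
  set F : Fin q → V × V × E := fun i =>
    ((vs.get ⟨2 * i.val, h2i i⟩).val.1, (vs.get ⟨2 * i.val + 1, h2i1 i⟩).val.1,
      (vs.get ⟨2 * i.val, h2i i⟩).val.2) with hF
  -- the matching facts at even positions
  have hMJf : ∀ i : Fin q, vs.get ⟨2 * i.val, h2i i⟩ ≠ vs.get ⟨2 * i.val + 1, h2i1 i⟩ ∧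
      (vs.get ⟨2 * i.val, h2i i⟩).val.2 = (vs.get ⟨2 * i.val + 1, h2i1 i⟩).val.2 := by
    intro i
    have h := (hcyc ⟨2 * i.val, h2i i⟩).2
    have hmod : (2 * i.val + 1) % vs.length = 2 * i.val + 1 := Nat.mod_eq_of_lt (h2i1 i)
    simp only [hmod] at h
    have := h.mpr (by omega)
    exact (mem_MJ_iff G _ _).mp this
  -- endpoints differ
  have hvert : ∀ i : Fin q,
      (vs.get ⟨2 * i.val, h2i i⟩).val.1 ≠ (vs.get ⟨2 * i.val + 1, h2i1 i⟩).val.1 := by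
    intro i h
    exact (hMJf i).1 (Subtype.ext (Prod.ext h (hMJf i).2))
  -- good entries
  have hgood : ∀ i : Fin q, G.joins (F i).2.2 (F i).1 (F i).2.1 := by
    intro i
    refine joins_of_inc G ?_ ?_ (hvert i)
    · exact (vs.get ⟨2 * i.val, h2i i⟩).property
    · have := (vs.get ⟨2 * i.val + 1, h2i1 i⟩).property
      rw [← (hMJf i).2] at this
      exact this
  -- index arithmetic for the successor
  have hsucc : ∀ i : Fin q, (i.val + 1) % q < q := fun i => Nat.mod_lt _ (by omega)
  have key : ∀ i : Fin q, 2 * ((i.val + 1) % q) = (2 * i.val + 2) % n := by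
    intro i
    rcases Nat.lt_or_ge (i.val + 1) q with h | h
    · rw [Nat.mod_eq_of_lt h, Nat.mod_eq_of_lt (by omega)]
      omega
    · have hiq : i.val + 1 = q := by have := i.isLt; omega
      have h2 : 2 * i.val + 2 = n := by omega
      rw [hiq, Nat.mod_self, h2, Nat.mod_self]
  -- the dynamic step between consecutive entries
  have hstep : ∀ i : Fin q,
      DynStep G adjH c (F i) (F ⟨(i.val + 1) % q, hsucc i⟩) := by
    intro i
    set i' : Fin q := ⟨(i.val + 1) % q, hsucc i⟩ with hi'
    have hA := hcyc ⟨2 * i.val + 1, h2i1 i⟩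
    have hmod : (2 * i.val + 1 + 1) % vs.length = 2 * i'.val := by
      rw [hi']
      show (2 * i.val + 2) % n = 2 * ((i.val + 1) % q)
      exact (key i).symm
    simp only [hmod] at hA
    set p : L2V G := vs.get ⟨2 * i.val + 1, h2i1 i⟩ with hp
    set r : L2V G := vs.get ⟨2 * i'.val, h2i i'⟩ with hr
    have hadj : (L2Graph G adjH c).Adj p r := by
      have := hA.1
      convert this using 2
    have hnotMJ : s(p, r) ∉ MJ G := by
      intro hmem
      have := hA.2.mp (by convert hmem using 2)
      omega
    have hpr : p ≠ r := by
      intro h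
      have h2 := hginj h
      simp only [Fin.mk.injEq] at h2
      omega
    have hpr2 : p.val.2 ≠ r.val.2 := fun h => hnotMJ ((mem_MJ_iff G p r).mpr ⟨hpr, h⟩)
    -- the shared-edge facts
    have hei : (F i).2.2 = p.val.2 := (hMJf i).2
    have hyi : (F i).2.1 = p.val.1 := rfl
    have hxi' : (F i').1 = r.val.1 := rfl
    have hei' : (F i').2.2 = r.val.2 := rfl
    -- common vertex case helper
    have doVert : p.val.1 = r.val.1 → adjH (c p.val.2) (c r.val.2) →
        DynStep G adjH c (F i) (F i') := by
      intro h1 h2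
      exact Or.inl ⟨h1, by rw [hei]; exact h2⟩
    -- parallel case helper
    have doPar : p.val.1 ≠ r.val.1 → G.parallel p.val.2 r.val.2 →
        DynStep G adjH c (F i) (F i') := by
      intro h1 hpar
      have hjoin : G.joins p.val.2 (F i).1 p.val.1 := by
        have := hgood i
        rw [hei] at this
        exact this
      -- r.1 is incident with p's edge
      have hrinc : G.inc r.val.1 p.val.2 :=
        inc_of_parallel G hpar r.property
      have hrx : r.val.1 = (F i).1 := by
        by_contra hne'
        have h1' : r.val.1 ≠ p.val.1 := fun h => h1 h.symm
        have := inc_eq G hrinc hjoin hne'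
        exact h1' this
      -- the other endpoint of r's edge
      have hs2 : r.val.2 = (vs.get ⟨2 * i'.val + 1, h2i1 i'⟩).val.2 := (hMJf i').2
      have hyinc : G.inc (vs.get ⟨2 * i'.val + 1, h2i1 i'⟩).val.1 p.val.2 := by
        apply inc_of_parallel G hpar
        rw [hs2]
        exact (vs.get ⟨2 * i'.val + 1, h2i1 i'⟩).property
      have hyne : (vs.get ⟨2 * i'.val + 1, h2i1 i'⟩).val.1 ≠ (F i).1 := by
        intro h
        exact hvert i' (hrx.trans h.symm)
      have hyy : (vs.get ⟨2 * i'.val + 1, h2i1 i'⟩).val.1 = p.val.1 :=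
        inc_eq G hyinc hjoin hyne
      refine Or.inr ⟨hrx.symm, ?_, ?_, ?_⟩
      · show (F i).2.1 = (vs.get ⟨2 * i'.val + 1, h2i1 i'⟩).val.1
        exact hyy.symm
      · rw [hei]; exact fun h => hpr2 h
      · rw [hei]; exact hpar
    rcases hadj with hA1 | hA1
    · rcases hA1 with ⟨h2, _⟩ | ⟨h1, _, h3⟩ | ⟨h1, _, h3⟩
      · exact absurd h2 hpr2
      · exact doVert h1 h3
      · exact doPar h1 h3
    · rcases hA1 with ⟨h2, _⟩ | ⟨h1, _, h3⟩ | ⟨h1, _, h3⟩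
      · exact absurd h2.symm hpr2
      · exact doVert h1.symm (hH h3)
      · exact doPar (fun h => h1 h.symm) (G.parallel_symm' h3)
  -- assemble the trail
  refine ⟨List.ofFn F, ⟨?_, ?_, ?_, ?_⟩, ?_, ?_⟩
  · simp only [ne_eq, List.ofFn_eq_nil_iff]
    omega
  · -- nodup edges
    unfold edgesOf
    rw [List.map_ofFn, List.nodup_ofFn]
    intro i j hij
    simp only [Function.comp] at hij
    by_contra hne'
    -- vs[2j] has the same edge as vs[2i]
    have hjoin : G.joins (F i).2.2 (F i).1 (F i).2.1 := hgood i
    have hjinc : G.inc (vs.get ⟨2 * j.val, h2i j⟩).val.1 (F i).2.2 := by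
      have := (vs.get ⟨2 * j.val, h2i j⟩).property
      show G.inc _ (vs.get ⟨2 * i.val, h2i i⟩).val.2
      have he : (vs.get ⟨2 * i.val, h2i i⟩).val.2 = (vs.get ⟨2 * j.val, h2i j⟩).val.2 := hij
      rw [he]
      exact this
    have he : (vs.get ⟨2 * i.val, h2i i⟩).val.2 = (vs.get ⟨2 * j.val, h2i j⟩).val.2 := hij
    rcases eq_or_ne (vs.get ⟨2 * j.val, h2i j⟩).val.1 (F i).1 with h | h
    · have : vs.get ⟨2 * j.val, h2i j⟩ = vs.get ⟨2 * i.val, h2i i⟩ :=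
        Subtype.ext (Prod.ext h he.symm)
      have h2 := hginj this
      simp only [Fin.mk.injEq] at h2
      exact hne' (Fin.ext (by omega)).symm
    · have hy := inc_eq G hjinc hjoin h
      have he2 : (F i).2.2 = (vs.get ⟨2 * i.val + 1, h2i1 i⟩).val.2 := (hMJf i).2
      have : vs.get ⟨2 * j.val, h2i j⟩ = vs.get ⟨2 * i.val + 1, h2i1 i⟩ :=
        Subtype.ext (Prod.ext hy (he.symm.trans he2))
      have h2 := hginj this
      simp only [Fin.mk.injEq] at h2
      omega
  · -- good entries
    intro t ht
    rw [List.mem_iff_get] at ht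
    obtain ⟨k, hk⟩ := ht
    rw [List.get_ofFn] at hk
    rw [← hk]
    exact hgood _
  · -- the dynamic steps
    intro pr hpr
    rw [List.mem_iff_get] at hpr
    obtain ⟨k, hk⟩ := hpr
    have hlq : (List.ofFn F).length = q := List.length_ofFn
    have hzl : ((List.ofFn F).zip ((List.ofFn F).rotate 1)).length = q := by
      rw [List.length_zip, List.length_rotate, hlq, Nat.min_self]
    have hkq : k.val < q := by have := k.isLt; omega
    have hrotlen : ((List.ofFn F).rotate 1).length = q := by
      rw [List.length_rotate, hlq]
    have h1 : ((List.ofFn F).zip ((List.ofFn F).rotate 1)).get k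
        = ((List.ofFn F).get ⟨k.val, by omega⟩,
           ((List.ofFn F).rotate 1).get ⟨k.val, by omega⟩) := by
      rw [List.get_eq_getElem, List.getElem_zip]
      rfl
    have h2 : ((List.ofFn F).rotate 1).get ⟨k.val, by omega⟩
        = (List.ofFn F).get ⟨(k.val + 1) % q, by rw [hlq]; exact hsucc ⟨k.val, hkq⟩⟩ := by
      rw [List.get_rotate]
      congr 1
      apply Fin.ext
      simp [hlq]
    rw [← hk, h1, h2, List.get_ofFn, List.get_ofFn]
    have := hstep ⟨k.val, hkq⟩
    convert this using 2
    rfl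
    rfl
  · rw [List.length_ofFn]; omega
  · intro i hi
    rw [List.length_ofFn] at hi
    constructor
    · rw [List.get_ofFn]
      apply Prod.ext
      · rfl
      · rfl
    · rw [List.get_ofFn]
      apply Prod.ext
      · rfl
      · exact ((hMJf ⟨i, by simpa using hi⟩).2).symm

end DynH
end

section
/- If an H-colored multigraph G has a closed Euler dynamic H-trail, then L_n^H(G) is Hamiltonian for every n ≥ 2. -/
namespace DynH

variable {V E C : Type}

/-- Adjacency for the auxiliary graph `L_n^H(G)` (`n ≥ 2`).  Its vertices are the
incidences `f(x,e)` together with, for each edge `e`, the `n - 2` intermediate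
vertices of the subdividing path.  (One-sided relation; symmetrized in `LnGraph`.) -/
def LnAdj (G : Multigraph V E) (adjH : C → C → Prop) (c : E → C) (n : ℕ) :
    (L2V G ⊕ E × Fin (n - 2)) → (L2V G ⊕ E × Fin (n - 2)) → Prop
  | Sum.inl p, Sum.inl q =>
      (p.val.1 = q.val.1 ∧ p.val.2 ≠ q.val.2 ∧ adjH (c p.val.2) (c q.val.2))
      ∨ (p.val.1 ≠ q.val.1 ∧ p.val.2 ≠ q.val.2 ∧ G.parallel p.val.2 q.val.2)
      ∨ (n = 2 ∧ p.val.2 = q.val.2 ∧ p.val.1 ≠ q.val.1)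
  | Sum.inl p, Sum.inr gi =>
      p.val.2 = gi.1 ∧
        ((p.val.1 = G.fst gi.1 ∧ gi.2.val = 0) ∨ (p.val.1 = G.snd gi.1 ∧ gi.2.val = n - 3))
  | Sum.inr gi, Sum.inl p =>
      p.val.2 = gi.1 ∧
        ((p.val.1 = G.fst gi.1 ∧ gi.2.val = 0) ∨ (p.val.1 = G.snd gi.1 ∧ gi.2.val = n - 3))
  | Sum.inr gi, Sum.inr gj =>
      gi.1 = gj.1 ∧ (gi.2.val + 1 = gj.2.val ∨ gj.2.val + 1 = gi.2.val)

/-- The auxiliary simple graph `L_n^H(G)`. -/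
def LnGraph (G : Multigraph V E) (adjH : C → C → Prop) (c : E → C) (n : ℕ) :
    SimpleGraph (L2V G ⊕ E × Fin (n - 2)) where
  Adj a b := LnAdj G adjH c n a b ∨ LnAdj G adjH c n b a
  symm := ⟨fun _ _ h => Or.symm h⟩
  loopless := ⟨fun a h => by
    rcases a with p | gi <;>
      rcases h with h | h <;> simp [LnAdj] at h <;> omega⟩

end DynH

namespace DynH

/-! ### Auxiliary machinery for the Hamiltonicity proof -/

section HamAux

variable {α : Type}

/-- Build a walk along a chain of adjacent vertices. -/
def mkWalk (Gr : SimpleGraph α) : (a : α) → (l : List α) → (b : α) →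
    List.Chain Gr.Adj a (l ++ [b]) → Gr.Walk a b
  | _, [], _, h => SimpleGraph.Walk.cons (List.isChain_pair.1 h) SimpleGraph.Walk.nil
  | _, x :: l, b, h =>
      SimpleGraph.Walk.cons (List.chain_cons.1 h).1 (mkWalk Gr x l b (List.chain_cons.1 h).2)

lemma mkWalk_support (Gr : SimpleGraph α) :
    ∀ (a : α) (l : List α) (b : α) (h : List.Chain Gr.Adj a (l ++ [b])),
      (mkWalk Gr a l b h).support = a :: (l ++ [b])
  | _, [], _, _ => rfl
  | a, x :: l, b, h => by
      simp [mkWalk, mkWalk_support Gr x l b (List.chain_cons.1 h).2]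

/-- A cyclically closed list of distinct vertices covering the whole (finite) vertex
set yields a Hamiltonian cycle. -/
lemma hamiltonian_of_cycleList [DecidableEq α] [Fintype α]
    (Gr : SimpleGraph α) (vs : List α)
    (hnd : vs.Nodup) (hlen : 3 ≤ vs.length) (hmem : ∀ v, v ∈ vs)
    (hchain : vs.Chain' Gr.Adj)
    (hclose : ∀ u ∈ vs.getLast?, ∀ w ∈ vs.head?, Gr.Adj u w) :
    Gr.IsHamiltonian := by
  have hndfull := hnd
  match vs, hnd, hlen, hmem, hchain, hclose, hndfull with
  | a :: x :: l2, hnd, hlen, hmem, hchain, hclose, hndfull =>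
  obtain ⟨m', b, rfl⟩ : ∃ m' b, l2 = m' ++ [b] := by
    rcases l2.eq_nil_or_concat with rfl | ⟨m', b, rfl⟩
    · simp at hlen
    · exact ⟨m', b, List.concat_eq_append⟩
  -- extract adjacency data
  have hax : Gr.Adj a x := (List.isChain_cons_cons.1 hchain).1
  have hc2 : List.Chain Gr.Adj x (m' ++ [b]) := (List.isChain_cons_cons.1 hchain).2
  have hba : Gr.Adj b a := by
    refine hclose b ?_ a ?_
    · rw [show (a :: x :: (m' ++ [b])) = (a :: x :: m') ++ [b] by simp, List.getLast?_concat]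
      rfl
    · simp
  rw [List.nodup_cons, List.nodup_cons] at hnd
  obtain ⟨ha, hx, hrest⟩ := hnd
  -- the walk
  set p0 : Gr.Walk x b := mkWalk Gr x m' b hc2 with hp0
  set p : Gr.Walk x a := p0.concat hba with hp
  have hsup : p.support = (x :: (m' ++ [b])) ++ [a] := by
    rw [hp, SimpleGraph.Walk.support_concat, mkWalk_support]
  have hpath : p.IsPath := by
    rw [SimpleGraph.Walk.isPath_def, hsup]
    rw [List.nodup_append]
    refine ⟨by simp [hx, hrest], by simp, ?_⟩
    intro v hv w hw hvw
    simp only [List.mem_singleton] at hw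
    subst hw hvw
    exact ha hv
  have hedge : s(a, x) ∉ p.edges := by
    rw [hp, SimpleGraph.Walk.edges_concat, List.concat_eq_append]
    intro hm
    rcases List.mem_append.1 hm with hm | hm
    · have : a ∈ p0.support := SimpleGraph.Walk.fst_mem_support_of_mem_edges p0 hm
      rw [hp0, mkWalk_support] at this
      exact ha this
    · simp only [List.mem_singleton, Sym2.eq, Sym2.rel_iff', Prod.mk.injEq, Prod.swap_prod_mk] at hm
      rcases hm with ⟨h1, h2⟩ | ⟨-, h2⟩
      · subst h1; exact ha (by simp)
      · subst h2; exact hx (by simp)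
  set cyc : Gr.Walk a a := SimpleGraph.Walk.cons hax p with hcycdef
  have hcyc : cyc.IsCycle := (SimpleGraph.Walk.cons_isCycle_iff p hax).2 ⟨hpath, hedge⟩
  refine fun _ => ⟨a, cyc, hcyc, ?_⟩
  intro v
  have htail : cyc.tail.support = (x :: (m' ++ [b])) ++ [a] := by
    rw [SimpleGraph.Walk.support_tail_of_not_nil cyc hcyc.not_nil, hcycdef,
      SimpleGraph.Walk.support_cons, List.tail_cons, hsup]
  rw [htail]
  have hperm : List.Perm ((x :: (m' ++ [b])) ++ [a]) (a :: x :: (m' ++ [b])) :=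
    List.perm_append_singleton a _
  rw [hperm.count_eq]
  exact List.count_eq_one_of_mem hndfull (hmem v)

/-- Nonemptiness of a `flatMap` of nonempty lists. -/
lemma flatMap_ne_nil' {β γ : Type} (f : γ → List β) (hf : ∀ b, f b ≠ [])
    {L : List γ} (hL : L ≠ []) : L.flatMap f ≠ [] := by
  cases L with
  | nil => exact absurd rfl hL
  | cons b L =>
      simp only [List.flatMap_cons]
      intro h
      exact hf b (List.append_eq_nil_iff.1 h).1

lemma head?_flatMap {β γ : Type} (f : γ → List β) (hf : ∀ b, f b ≠ []) :
    ∀ (L : List γ) (hL : L ≠ []), (L.flatMap f).head? = (f (L.head hL)).head?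
  | b :: L, _ => by
      rw [List.flatMap_cons, List.head?_append_of_ne_nil _ (hf b), List.head_cons]

lemma getLast?_flatMap {β γ : Type} (f : γ → List β) (hf : ∀ b, f b ≠ []) :
    ∀ (L : List γ) (hL : L ≠ []), (L.flatMap f).getLast? = (f (L.getLast hL)).getLast?
  | [b], _ => by simp
  | b :: b' :: L, _ => by
      rw [List.flatMap_cons, List.getLast?_append_of_ne_nil _
          (flatMap_ne_nil' f hf (by simp : (b' :: L : List γ) ≠ [])),
        getLast?_flatMap f hf (b' :: L) (by simp)]
      rfl

lemma chain'_flatMap {β γ : Type} (f : γ → List β) (R : β → β → Prop)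
    (hf : ∀ b, f b ≠ []) :
    ∀ (L : List γ), (∀ b ∈ L, (f b).Chain' R) →
      L.Chain' (fun b b' => R ((f b).getLast (hf b)) ((f b').head (hf b'))) →
      (L.flatMap f).Chain' R
  | [], _, _ => by exact List.IsChain.nil
  | [b], h1, _ => by simpa using h1 b (by simp)
  | b :: b' :: L, h1, h2 => by
      rw [List.flatMap_cons]
      refine List.isChain_append.2 ⟨h1 b (by simp), ?_, ?_⟩
      · exact chain'_flatMap f R hf (b' :: L) (fun t ht => h1 t (List.mem_cons_of_mem _ ht))
          (List.isChain_cons_cons.1 h2).2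
      · intro u hu w hw
        rw [List.getLast?_eq_getLast (hf b), Option.mem_some_iff] at hu
        rw [head?_flatMap f hf (b' :: L) (by simp), List.head_cons,
          List.head?_eq_head (hf b'), Option.mem_some_iff] at hw
        subst hu; subst hw
        exact (List.isChain_cons_cons.1 h2).1

/-- Cyclic-pairs hypothesis unpacked to indexed form. -/
lemma cyclic_pairs_of_zip_rotate {γ : Type} (R : γ → γ → Prop) (L : List γ)
    (h : ∀ p ∈ L.zip (L.rotate 1), R p.1 p.2) (hpos : 0 < L.length) :
    ∀ (i : ℕ) (hi : i < L.length),
      R (L.get ⟨i, hi⟩) (L.get ⟨(i + 1) % L.length, Nat.mod_lt _ hpos⟩) := by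
  intro i hi
  have hlz : (L.zip (L.rotate 1)).length = L.length := by simp
  have hmem : (L.zip (L.rotate 1)).get ⟨i, by omega⟩ ∈ L.zip (L.rotate 1) :=
    List.get_mem _ _
  have hg : (L.zip (L.rotate 1)).get ⟨i, by omega⟩
      = (L.get ⟨i, hi⟩, L.get ⟨(i + 1) % L.length, Nat.mod_lt _ hpos⟩) := by
    simp only [List.get_eq_getElem, List.getElem_zip]
    refine Prod.ext rfl ?_
    rw [List.getElem_rotate]
  have := h _ hmem
  rw [hg] at this
  exact this

end HamAux


section Blocks

variable {V E C : Type}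

lemma getLast_eq_of_getLast? {β : Type} {l : List β} {a : β} (h : l.getLast? = some a)
    (hne : l ≠ []) : l.getLast hne = a := by
  rw [List.getLast?_eq_getLast hne, Option.some_inj] at h
  exact h

lemma joins_ne (G : Multigraph V E) {e : E} {x y : V} (h : G.joins e x y) : x ≠ y := by
  rcases h with ⟨h1, h2⟩ | ⟨h1, h2⟩ <;>
    exact fun hx => G.loopless e (by rw [h1, h2, hx])

lemma joins_inc_left (G : Multigraph V E) {e : E} {x y : V} (h : G.joins e x y) :
    G.inc x e := by
  rcases h with ⟨h1, _⟩ | ⟨_, h2⟩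
  exacts [Or.inl h1, Or.inr h2]

lemma joins_inc_right (G : Multigraph V E) {e : E} {x y : V} (h : G.joins e x y) :
    G.inc y e := by
  rcases h with ⟨_, h2⟩ | ⟨h1, _⟩
  exacts [Or.inr h2, Or.inl h1]

/-- Canonical incidence vertex. -/
def mkv (G : Multigraph V E) [DecidableEq V] (x : V) (e : E) : L2V G :=
  if h : G.inc x e then ⟨(x, e), h⟩ else ⟨(G.fst e, e), Or.inl rfl⟩

lemma mkv_snd (G : Multigraph V E) [DecidableEq V] (x : V) (e : E) :
    (mkv G x e).val.2 = e := by
  unfold mkv; by_cases h : G.inc x e <;> simp [h]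

lemma mkv_of_inc (G : Multigraph V E) [DecidableEq V] {x : V} {e : E} (h : G.inc x e) :
    mkv G x e = ⟨(x, e), h⟩ := dif_pos h

lemma mkv_fst (G : Multigraph V E) [DecidableEq V] {x : V} {e : E} (h : G.inc x e) :
    (mkv G x e).val.1 = x := by rw [mkv_of_inc G h]

/-- The block of the Hamiltonian cycle corresponding to one edge traversal. -/
def blk (G : Multigraph V E) [DecidableEq V] (n : ℕ) (t : V × V × E) :
    List (L2V G ⊕ E × Fin (n - 2)) :=
  Sum.inl (mkv G t.1 t.2.2) ::
    ((if t.1 = G.fst t.2.2 then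
        (List.finRange (n - 2)).map (fun i => Sum.inr (t.2.2, i))
      else
        ((List.finRange (n - 2)).map (fun i => Sum.inr (t.2.2, i))).reverse)
      ++ [Sum.inl (mkv G t.2.1 t.2.2)])

lemma blk_ne_nil (G : Multigraph V E) [DecidableEq V] (n : ℕ) (t : V × V × E) :
    blk G n t ≠ [] := by simp [blk]

lemma blk_length (G : Multigraph V E) [DecidableEq V] {n : ℕ} (hn : 2 ≤ n) (t : V × V × E) :
    (blk G n t).length = n := by
  unfold blk
  split <;> simp <;> omega

lemma blk_head? (G : Multigraph V E) [DecidableEq V] (n : ℕ) (t : V × V × E) :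
    (blk G n t).head? = some (Sum.inl (mkv G t.1 t.2.2)) := rfl

lemma blk_head (G : Multigraph V E) [DecidableEq V] (n : ℕ) (t : V × V × E)
    (h : blk G n t ≠ []) : (blk G n t).head h = Sum.inl (mkv G t.1 t.2.2) := rfl

lemma blk_getLast? (G : Multigraph V E) [DecidableEq V] (n : ℕ) (t : V × V × E) :
    (blk G n t).getLast? = some (Sum.inl (mkv G t.2.1 t.2.2)) := by
  unfold blk
  rw [← List.cons_append, List.getLast?_concat]

lemma blk_getLast (G : Multigraph V E) [DecidableEq V] (n : ℕ) (t : V × V × E)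
    (h : blk G n t ≠ []) : (blk G n t).getLast h = Sum.inl (mkv G t.2.1 t.2.2) :=
  getLast_eq_of_getLast? (blk_getLast? G n t) h

/-- Each vertex of a block mentions the edge of the block. -/
def edgeOf (G : Multigraph V E) (n : ℕ) : (L2V G ⊕ E × Fin (n - 2)) → E :=
  Sum.elim (fun p => p.val.2) (fun q => q.1)

lemma edgeOf_mem_blk (G : Multigraph V E) [DecidableEq V] {n : ℕ} {t : V × V × E}
    {v : L2V G ⊕ E × Fin (n - 2)} (h : v ∈ blk G n t) : edgeOf G n v = t.2.2 := by
  rcases List.mem_cons.1 h with rfl | h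
  · simp [edgeOf, mkv_snd]
  rcases List.mem_append.1 h with h | h
  · have hv : v ∈ (List.finRange (n - 2)).map
        (fun i => (Sum.inr (t.2.2, i) : L2V G ⊕ E × Fin (n - 2))) := by
      split at h
      · exact h
      · exact List.mem_reverse.1 h
    obtain ⟨i, -, rfl⟩ := List.mem_map.1 hv
    rfl
  · rw [List.mem_singleton.1 h]
    simp [edgeOf, mkv_snd]

lemma blk_nodup (G : Multigraph V E) [DecidableEq V] (n : ℕ) (t : V × V × E)
    (ht : G.joins t.2.2 t.1 t.2.1) : (blk G n t).Nodup := by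
  obtain ⟨x, y, e⟩ := t
  simp only at ht
  have hix : G.inc x e := joins_inc_left G ht
  have hiy : G.inc y e := joins_inc_right G ht
  have hmkv : mkv G x e ≠ mkv G y e := by
    rw [mkv_of_inc G hix, mkv_of_inc G hiy]
    intro hcon
    exact joins_ne G ht (congrArg (fun p => p.val.1) hcon)
  have hinj : Function.Injective
      (fun i : Fin (n - 2) => (Sum.inr (e, i) : L2V G ⊕ E × Fin (n - 2))) := by
    intro i j hij
    simpa using hij
  have hinn : ((List.finRange (n - 2)).map
      (fun i => (Sum.inr (e, i) : L2V G ⊕ E × Fin (n - 2)))).Nodup :=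
    (List.nodup_finRange _).map hinj
  have key : ∀ l : List (L2V G ⊕ E × Fin (n - 2)), l.Nodup →
      (∀ v ∈ l, ∃ i : Fin (n - 2), v = Sum.inr (e, i)) →
      (Sum.inl (mkv G x e) :: (l ++ [Sum.inl (mkv G y e)])).Nodup := by
    intro l hl hmem
    rw [List.nodup_cons, List.nodup_append]
    refine ⟨?_, hl, by simp, ?_⟩
    · intro hmem'
      rcases List.mem_append.1 hmem' with h | h
      · obtain ⟨i, hcon⟩ := hmem _ h
        exact Sum.inl_ne_inr hcon
      · exact hmkv (Sum.inl.inj (List.mem_singleton.1 h))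
    · intro v hv w hw hvw
      rw [List.mem_singleton] at hw
      subst hw hvw
      obtain ⟨i, hcon⟩ := hmem _ hv
      exact Sum.inl_ne_inr hcon
  unfold blk
  split
  · refine key _ hinn ?_
    intro v hv
    obtain ⟨i, -, rfl⟩ := List.mem_map.1 hv
    exact ⟨i, rfl⟩
  · refine key _ (List.nodup_reverse.2 hinn) ?_
    intro v hv
    obtain ⟨i, -, rfl⟩ := List.mem_map.1 (List.mem_reverse.1 hv)
    exact ⟨i, rfl⟩

/-- getElem on a mapped finRange. -/
lemma finmap_getElem {β : Type} (mm : ℕ) (g : Fin mm → β) (i : ℕ) (hi : i < mm) :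
    ((List.finRange mm).map g)[i]'(by simpa using hi) = g ⟨i, hi⟩ := by
  rw [List.getElem_map, List.getElem_finRange]
  rfl

lemma finmap_ne_nil {β : Type} (mm : ℕ) (hm : 0 < mm) (g : Fin mm → β) :
    (List.finRange mm).map g ≠ [] := by
  simp [List.finRange_eq_nil_iff]
  omega

lemma finmap_head? {β : Type} (mm : ℕ) (g : Fin mm → β) (h : 0 < mm) :
    ((List.finRange mm).map g).head? = some (g ⟨0, h⟩) := by
  rw [List.head?_eq_getElem?, List.getElem?_eq_getElem (by simpa using h)]
  rw [finmap_getElem mm g 0 h]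

lemma finmap_getLast? {β : Type} (mm : ℕ) (g : Fin mm → β) (h : 0 < mm) :
    ((List.finRange mm).map g).getLast? = some (g ⟨mm - 1, by omega⟩) := by
  have hl : ((List.finRange mm).map g).length = mm := by simp
  rw [List.getLast?_eq_getElem?, hl, List.getElem?_eq_getElem (by rw [hl]; omega)]
  rw [finmap_getElem mm g (mm - 1) (by omega)]

lemma finmap_chain' {β : Type} (R : β → β → Prop) (mm : ℕ) (g : Fin mm → β)
    (h : ∀ (i : ℕ) (hi : i + 1 < mm), R (g ⟨i, by omega⟩) (g ⟨i + 1, hi⟩)) :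
    List.Chain' R ((List.finRange mm).map g) := by
  refine List.isChain_iff_getElem.2 ?_
  intro i hi
  simp only [List.length_map, List.length_finRange] at hi
  rw [finmap_getElem mm g i (by omega),
    finmap_getElem mm g (i + 1) (by omega)]
  exact h i (by omega)

end Blocks


section BlockChain

variable {V E C : Type}

lemma mem_blk_left (G : Multigraph V E) [DecidableEq V] (n : ℕ) (t : V × V × E) :
    Sum.inl (mkv G t.1 t.2.2) ∈ blk G n t := List.mem_cons_self

lemma mem_blk_right (G : Multigraph V E) [DecidableEq V] (n : ℕ) (t : V × V × E) :
    Sum.inl (mkv G t.2.1 t.2.2) ∈ blk G n t :=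
  List.mem_cons_of_mem _ (List.mem_append_right _ (by simp))

lemma mem_blk_inr (G : Multigraph V E) [DecidableEq V] (n : ℕ) (t : V × V × E)
    (i : Fin (n - 2)) : (Sum.inr (t.2.2, i) : L2V G ⊕ E × Fin (n - 2)) ∈ blk G n t := by
  refine List.mem_cons_of_mem _ (List.mem_append_left _ ?_)
  split
  · exact List.mem_map.2 ⟨i, List.mem_finRange i, rfl⟩
  · exact List.mem_reverse.2 (List.mem_map.2 ⟨i, List.mem_finRange i, rfl⟩)

lemma blk_chain' (G : Multigraph V E) [DecidableEq V] (adjH : C → C → Prop) (c : E → C)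
    (n : ℕ) (hn : 2 ≤ n) (t : V × V × E) (ht : G.joins t.2.2 t.1 t.2.1) :
    List.Chain' (LnGraph G adjH c n).Adj (blk G n t) := by
  obtain ⟨x, y, e⟩ := t
  simp only at ht
  have hxy : x ≠ y := joins_ne G ht
  have hix : G.inc x e := joins_inc_left G ht
  have hiy : G.inc y e := joins_inc_right G ht
  have hcase : (x = G.fst e ∧ y = G.snd e) ∨ (x = G.snd e ∧ y = G.fst e) := by
    rcases ht with ⟨h1, h2⟩ | ⟨h1, h2⟩
    · exact Or.inl ⟨h1.symm, h2.symm⟩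
    · exact Or.inr ⟨h2.symm, h1.symm⟩
  set g : Fin (n - 2) → (L2V G ⊕ E × Fin (n - 2)) := fun i => Sum.inr (e, i) with hg
  by_cases hm : n - 2 = 0
  · -- n = 2 : the block is just the pair of incidence vertices
    have hn2 : n = 2 := by omega
    have hfr : (List.finRange (n - 2)) = [] := List.finRange_eq_nil_iff.2 hm
    have hb : blk G n (x, y, e) = [Sum.inl (mkv G x e), Sum.inl (mkv G y e)] := by
      unfold blk
      simp [hfr]
    rw [hb]; refine List.isChain_pair.2 ?_
    refine Or.inl (Or.inr (Or.inr ⟨hn2, ?_, ?_⟩))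
    · rw [mkv_snd, mkv_snd]
    · rw [mkv_fst G hix, mkv_fst G hiy]
      exact hxy
  · have hm1 : 0 < n - 2 := Nat.pos_of_ne_zero hm
    have hinterior : ∀ (i : ℕ) (hi : i + 1 < n - 2),
        (LnGraph G adjH c n).Adj (g ⟨i, by omega⟩) (g ⟨i + 1, hi⟩) :=
      fun i hi => Or.inl ⟨rfl, Or.inl rfl⟩
    have hinterior' : ∀ (i : ℕ) (hi : i + 1 < n - 2),
        flip (LnGraph G adjH c n).Adj (g ⟨i, by omega⟩) (g ⟨i + 1, hi⟩) :=
      fun i hi => Or.inl ⟨rfl, Or.inr rfl⟩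
    rcases hcase with ⟨hx1, hy1⟩ | ⟨hx1, hy1⟩
    · -- forward orientation
      have hif : (if x = G.fst e then (List.finRange (n - 2)).map g
          else ((List.finRange (n - 2)).map g).reverse) = (List.finRange (n - 2)).map g :=
        if_pos hx1
      unfold blk
      simp only
      rw [hif]; refine List.isChain_cons.2 ?_
      constructor
      · intro v hv
        rw [List.head?_append_of_ne_nil _ (finmap_ne_nil _ hm1 g),
          finmap_head? _ g hm1, Option.mem_some_iff] at hv
        subst hv
        exact Or.inl ⟨mkv_snd G x e, Or.inl ⟨(mkv_fst G hix).trans hx1, rfl⟩⟩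
      · rw [List.isChain_append]
        refine ⟨finmap_chain' _ _ g hinterior, List.isChain_singleton _, ?_⟩
        intro u hu w hw
        rw [finmap_getLast? _ g hm1, Option.mem_some_iff] at hu
        rw [List.head?_cons, Option.mem_some_iff] at hw
        subst hu; subst hw
        refine Or.inl ⟨mkv_snd G y e, Or.inr ⟨(mkv_fst G hiy).trans hy1, ?_⟩⟩
        simp
        omega
    · -- reverse orientation
      have hxne : ¬ x = G.fst e := by
        rw [hx1]
        exact fun hcon => G.loopless e hcon.symm
      have hif : (if x = G.fst e then (List.finRange (n - 2)).map g
          else ((List.finRange (n - 2)).map g).reverse) =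
            ((List.finRange (n - 2)).map g).reverse := if_neg hxne
      unfold blk
      simp only
      rw [hif]; refine List.isChain_cons.2 ?_
      constructor
      · intro v hv
        rw [List.head?_append_of_ne_nil _
            (by simpa using finmap_ne_nil _ hm1 g),
          List.head?_reverse, finmap_getLast? _ g hm1, Option.mem_some_iff] at hv
        subst hv
        refine Or.inl ⟨mkv_snd G x e, Or.inr ⟨(mkv_fst G hix).trans hx1, ?_⟩⟩
        simp
        omega
      · rw [List.isChain_append]
        refine ⟨List.isChain_reverse.2 (finmap_chain' _ _ g hinterior'), List.isChain_singleton _, ?_⟩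
        intro u hu w hw
        rw [List.getLast?_reverse, finmap_head? _ g hm1, Option.mem_some_iff] at hu
        rw [List.head?_cons, Option.mem_some_iff] at hw
        subst hu; subst hw
        exact Or.inl ⟨mkv_snd G y e, Or.inl ⟨(mkv_fst G hiy).trans hy1, rfl⟩⟩

lemma blk_trans (G : Multigraph V E) [DecidableEq V] (adjH : C → C → Prop) (c : E → C)
    (n : ℕ) (t t' : V × V × E) (ht : G.joins t.2.2 t.1 t.2.1)
    (ht' : G.joins t'.2.2 t'.1 t'.2.1) (hne : t.2.2 ≠ t'.2.2)
    (hstep : DynStep G adjH c t t') :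
    (LnGraph G adjH c n).Adj ((blk G n t).getLast (blk_ne_nil G n t))
      ((blk G n t').head (blk_ne_nil G n t')) := by
  rw [blk_getLast, blk_head]
  rcases hstep with ⟨h1, h2⟩ | ⟨h1, h2, h3, h4⟩
  · -- H-transition through a common vertex
    refine Or.inl (Or.inl ⟨?_, ?_, ?_⟩)
    · rw [mkv_fst G (joins_inc_right G ht), mkv_fst G (joins_inc_left G ht')]
      exact h1
    · rw [mkv_snd, mkv_snd]
      exact hne
    · rw [mkv_snd, mkv_snd]
      exact h2
  · -- lane change between parallel edges
    refine Or.inl (Or.inr (Or.inl ⟨?_, ?_, ?_⟩))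
    · rw [mkv_fst G (joins_inc_right G ht), mkv_fst G (joins_inc_left G ht')]
      rw [← h1]
      exact (joins_ne G ht).symm
    · rw [mkv_snd, mkv_snd]
      exact h3
    · rw [mkv_snd, mkv_snd]
      exact h4

end BlockChain


/-- If the `H`-colored multigraph `G` has a closed Euler dynamic `H`-trail, then
`L_n^H(G)` is Hamiltonian for every `n ≥ 2`. -/
theorem euler_dynHTrail_imp_Ln_hamiltonian {V E C : Type}
    [Fintype V] [Fintype E] [DecidableEq V] [DecidableEq E]
    (G : Multigraph V E) (adjH : C → C → Prop) (hH : Symmetric adjH) (c : E → C)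
    (hEuler : ∃ L : List (V × V × E),
      IsClosedDynHTrail G adjH c L ∧ ∀ e : E, e ∈ edgesOf L) :
    ∀ n : ℕ, 2 ≤ n → (LnGraph G adjH c n).IsHamiltonian := by
  intro n hn
  obtain ⟨L, ⟨hLne, hnodupE, hgood, hstep⟩, hall⟩ := hEuler
  have hblkne : ∀ t, blk G n t ≠ [] := blk_ne_nil G n
  have hpos : 0 < L.length := List.length_pos_iff.2 hLne
  have hcyc := cyclic_pairs_of_zip_rotate _ L hstep hpos
  have hmapnd : (L.map fun t => t.2.2).Nodup := hnodupE
  have hL2 : 2 ≤ L.length := by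
    by_contra hcon
    have h1 : L.length = 1 := by omega
    obtain ⟨t, rfl⟩ := List.length_eq_one_iff.1 h1
    have hd := hcyc 0 (by simp)
    simp only [List.get_eq_getElem, List.getElem_singleton] at hd
    rcases hd with ⟨hh, -⟩ | ⟨-, -, hh, -⟩
    · exact joins_ne G (hgood t (by simp)) hh.symm
    · exact hh rfl
  have hedge_ne : ∀ (i j : ℕ) (hi : i < L.length) (hj : j < L.length), i ≠ j →
      (L.get ⟨i, hi⟩).2.2 ≠ (L.get ⟨j, hj⟩).2.2 := by
    intro i j hi hj hij hcon
    apply hij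
    rw [List.get_eq_getElem, List.get_eq_getElem] at hcon
    have h1 : (L.map fun t => t.2.2)[i]'(by simpa using hi)
        = (L.map fun t => t.2.2)[j]'(by simpa using hj) := by
      rw [List.getElem_map, List.getElem_map]
      exact hcon
    exact (hmapnd.getElem_inj_iff).1 h1
  set vs := L.flatMap (blk G n) with hvs
  refine hamiltonian_of_cycleList _ vs ?_ ?_ ?_ ?_ ?_
  · -- Nodup
    rw [hvs, List.nodup_flatMap]
    constructor
    · exact fun t ht => blk_nodup G n t (hgood t ht)
    · have hpw : L.Pairwise (fun t t' => t.2.2 ≠ t'.2.2) := List.pairwise_map.1 hmapnd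
      refine hpw.imp ?_
      intro t t' hnee v hv hv'
      exact hnee ((edgeOf_mem_blk G hv).symm.trans (edgeOf_mem_blk G hv'))
  · -- length
    have hlen : vs.length = (L.map fun _ => n).sum := by
      rw [hvs, List.length_flatMap]
      congr 1
      exact List.map_congr_left fun t _ => blk_length G hn t
    have hrepl : (L.map fun _ => n).sum = L.length * n := by
      rw [List.map_const', List.sum_replicate, smul_eq_mul]
    have := Nat.mul_le_mul hL2 hn
    omega
  · -- membership
    intro v
    rw [hvs, List.mem_flatMap]
    obtain ⟨⟨z, e⟩, hincz⟩ | ⟨e, i⟩ := v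
    · obtain ⟨t, htL, hte⟩ := List.mem_map.1 (hall e)
      subst hte
      have hj : G.joins t.2.2 t.1 t.2.1 := hgood t htL
      refine ⟨t, htL, ?_⟩
      have hz : z = t.1 ∨ z = t.2.1 := by
        rcases hj with ⟨h1, h2⟩ | ⟨h1, h2⟩ <;> rcases hincz with h | h
        · exact Or.inl (h.symm.trans h1)
        · exact Or.inr (h.symm.trans h2)
        · exact Or.inr (h.symm.trans h1)
        · exact Or.inl (h.symm.trans h2)
      rcases hz with hz | hz
      · subst hz
        rw [show (⟨(t.1, t.2.2), hincz⟩ : L2V G) = mkv G t.1 t.2.2 from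
          (mkv_of_inc G hincz).symm]
        exact mem_blk_left G n t
      · subst hz
        rw [show (⟨(t.2.1, t.2.2), hincz⟩ : L2V G) = mkv G t.2.1 t.2.2 from
          (mkv_of_inc G hincz).symm]
        exact mem_blk_right G n t
    · obtain ⟨t, htL, hte⟩ := List.mem_map.1 (hall e)
      subst hte
      exact ⟨t, htL, mem_blk_inr G n t i⟩
  · -- chain
    rw [hvs]
    refine chain'_flatMap _ _ hblkne L ?_ ?_
    · exact fun t ht => blk_chain' G adjH c n hn t (hgood t ht)
    · refine List.isChain_iff_getElem.2 ?_
      intro i hi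
      have hstep' := hcyc i (by omega)
      have hfin : (⟨(i + 1) % L.length, Nat.mod_lt _ hpos⟩ : Fin L.length)
          = ⟨i + 1, by omega⟩ := Fin.ext (Nat.mod_eq_of_lt (by omega))
      rw [hfin] at hstep'
      exact blk_trans G adjH c n _ _ (hgood _ (List.get_mem _ _))
        (hgood _ (List.get_mem _ _))
        (hedge_ne i (i + 1) (by omega) (by omega) (by omega)) hstep'
  · -- closing edge
    intro u hu w hw
    rw [hvs, getLast?_flatMap _ hblkne L hLne, blk_getLast?, Option.mem_some_iff] at hu
    rw [hvs, head?_flatMap _ hblkne L hLne, blk_head?, Option.mem_some_iff] at hw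
    subst hu; subst hw
    have hgl : L.getLast hLne = L.get ⟨L.length - 1, by omega⟩ := List.getLast_eq_getElem hLne
    have hhd : L.head hLne = L.get ⟨0, hpos⟩ := (List.get_mk_zero hpos).symm
    have hstep' := hcyc (L.length - 1) (by omega)
    have hfin : (⟨(L.length - 1 + 1) % L.length, Nat.mod_lt _ hpos⟩ : Fin L.length)
        = ⟨0, hpos⟩ := by
      apply Fin.ext
      show (L.length - 1 + 1) % L.length = 0
      rw [Nat.sub_add_cancel hpos, Nat.mod_self]
    rw [hfin] at hstep'
    have htrans := blk_trans G adjH c n _ _ (hgood _ (List.get_mem _ _))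
      (hgood _ (List.get_mem _ _))
      (hedge_ne (L.length - 1) 0 (by omega) hpos (by omega)) hstep'
    rw [blk_getLast, blk_head] at htrans
    rw [hgl, hhd]
    exact htrans


end DynH
end
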